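/- In a connected graph with no separating edges, two distinct edges belong to the same C1-set if and only if they belong to exactly the same cycles of the graph. -/

import Mathlib

structure Multigraph (V E : Type) where
  ends : E → Sym2 V

namespace Multigraph

variable {V E : Type} (G : Multigraph V E)

def adjOn (F : Set E) (v w : V) : Prop := ∃ e ∈ F, G.ends e = s(v, w)

def ConnectedOn (F : Set E) : Prop := ∀ v w : V, Relation.ReflTransGen (G.adjOn F) v w

def Connected : Prop := G.ConnectedOn Set.univ

def Bridgeless : Prop := ∀ e : E, G.ConnectedOn ({e} : Set E)ᶜ

def SameC1 (e f : E) : Prop := e = f ∨ ¬ G.ConnectedOn ({e, f} : Set E)ᶜ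

def IsC1Set (S : Set E) : Prop := ∃ e : E, S = {f | G.SameC1 e f}

def compRel (S : Set E) (v w : V) : Prop := ∃ e ∉ S, G.ends e = s(v, w)

def contract (S : Set E) : Multigraph (Quot (G.compRel S)) {e // e ∈ S} :=
  ⟨fun e => (G.ends e.1).map (Quot.mk (G.compRel S))⟩

noncomputable def degree (v : V) : ℕ :=
  Nat.card {e : E // v ∈ G.ends e ∧ G.ends e ≠ s(v, v)} +
    2 * Nat.card {e : E // G.ends e = s(v, v)}

def IsCycleGraph : Prop :=
  G.Connected ∧ 1 ≤ Nat.card E ∧ Nat.card E = Nat.card V ∧ ∀ v : V, G.degree v = 2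

noncomputable def numComponents : ℕ := Nat.card (Quot (G.compRel (∅ : Set E)))

noncomputable def b1 : ℤ := (Nat.card E : ℤ) - (Nat.card V : ℤ) + (G.numComponents : ℤ)

end Multigraph

/-- A cycle of a multigraph: a closed walk with no repeated edges. -/
structure Multigraph.ClosedTrail {V E : Type} (G : Multigraph V E) where
  n : ℕ
  npos : 0 < n
  vert : Fin (n + 1) → V
  edge : Fin n → E
  closed : vert (Fin.last n) = vert 0
  compat : ∀ i : Fin n, G.ends (edge i) = s(vert i.castSucc, vert i.succ)
  inj : Function.Injective edge


namespace Multigraph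

variable {V E : Type} {G : Multigraph V E}

def IsWalk (G : Multigraph V E) : V → List E → V → Prop
  | v, [], w => v = w
  | v, e :: es, w => ∃ u, G.ends e = s(v, u) ∧ IsWalk G u es w

@[simp] lemma isWalk_nil {v w : V} : G.IsWalk v [] w ↔ v = w := Iff.rfl

@[simp] lemma isWalk_cons {v w : V} {e : E} {es : List E} :
    G.IsWalk v (e :: es) w ↔ ∃ u, G.ends e = s(v, u) ∧ G.IsWalk u es w := Iff.rfl

lemma adjOn_symm {F : Set E} {v w : V} (h : G.adjOn F v w) : G.adjOn F w v := by
  obtain ⟨e, he, heq⟩ := h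
  exact ⟨e, he, heq.trans Sym2.eq_swap⟩

lemma rtg_symm {F : Set E} {v w : V} (h : Relation.ReflTransGen (G.adjOn F) v w) :
    Relation.ReflTransGen (G.adjOn F) w v := by
  induction h with
  | refl => exact .refl
  | tail _ h ih => exact Relation.ReflTransGen.head (adjOn_symm h) ih

lemma exists_walk {F : Set E} {v w : V} (h : Relation.ReflTransGen (G.adjOn F) v w) :
    ∃ es : List E, G.IsWalk v es w ∧ ∀ e ∈ es, e ∈ F := by
  induction h using Relation.ReflTransGen.head_induction_on with
  | refl => exact ⟨[], rfl, by simp⟩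
  | head hab _ ih =>
      obtain ⟨es, hw, hmem⟩ := ih
      obtain ⟨e, he, heq⟩ := hab
      refine ⟨e :: es, ⟨_, heq, hw⟩, ?_⟩
      intro f hf
      rcases List.mem_cons.mp hf with h | h
      · exact h ▸ he
      · exact hmem f h

lemma isWalk_append {v w : V} {a b : List E} :
    G.IsWalk v (a ++ b) w ↔ ∃ u, G.IsWalk v a u ∧ G.IsWalk u b w := by
  induction a generalizing v with
  | nil => simp [IsWalk]
  | cons e tl ih =>
      constructor
      · rintro ⟨u, heq, hw⟩
        obtain ⟨x, h1, h2⟩ := ih.mp hw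
        exact ⟨x, ⟨u, heq, h1⟩, h2⟩
      · rintro ⟨x, ⟨u, heq, h1⟩, h2⟩
        exact ⟨u, heq, ih.mpr ⟨x, h1, h2⟩⟩

lemma exists_trail {v w : V} {es : List E} (h : G.IsWalk v es w) :
    ∃ ts : List E, G.IsWalk v ts w ∧ ts.Nodup ∧ ∀ e ∈ ts, e ∈ es := by
  induction es generalizing v with
  | nil => exact ⟨[], h, List.nodup_nil, by simp⟩
  | cons e tl ih =>
      obtain ⟨u, heq, hw⟩ := h
      obtain ⟨ts, hts, hnd, hsub⟩ := ih hw
      by_cases he : e ∈ ts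
      · obtain ⟨l₂, l₃, rfl⟩ := List.append_of_mem he
        obtain ⟨y, hy2, y1, heq2, hy3⟩ := isWalk_append.mp hts
        have hsym : s(v, u) = s(y, y1) := heq ▸ heq2
        have hnd₃ : (e :: l₃).Nodup := hnd.sublist (by simp)
        rcases Sym2.eq_iff.mp hsym with ⟨rfl, rfl⟩ | ⟨rfl, rfl⟩
        · refine ⟨e :: l₃, ⟨u, heq, hy3⟩, hnd₃, ?_⟩
          intro f hf
          rcases List.mem_cons.mp hf with h | h
          · simp [h]
          · exact List.mem_cons_of_mem _ (hsub f (by simp [h]))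
        · refine ⟨l₃, hy3, hnd₃.of_cons, ?_⟩
          intro f hf
          exact List.mem_cons_of_mem _ (hsub f (by simp [hf]))
      · refine ⟨e :: ts, ⟨u, heq, hts⟩, hnd.cons he, ?_⟩
        intro f hf
        rcases List.mem_cons.mp hf with h | h
        · simp [h]
        · exact List.mem_cons_of_mem _ (hsub f h)

lemma isWalk_toFin {v w : V} {es : List E} (h : G.IsWalk v es w) :
    ∃ vert : Fin (es.length + 1) → V,
      vert 0 = v ∧ vert (Fin.last _) = w ∧
      ∀ i : Fin es.length, G.ends (es.get i) = s(vert i.castSucc, vert i.succ) := by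
  induction es generalizing v with
  | nil => exact ⟨fun _ => v, rfl, h, fun i => i.elim0⟩
  | cons e tl ih =>
      obtain ⟨u, heq, hw⟩ := h
      obtain ⟨vert', h0, hl, hc⟩ := ih hw
      refine ⟨Fin.cases v vert', by simp, ?_, ?_⟩
      · show Fin.cases v vert' (Fin.last (tl.length + 1)) = w
        rw [← Fin.succ_last, Fin.cases_succ]
        exact hl
      · intro i
        refine Fin.cases ?_ ?_ i
        · show G.ends e = s(Fin.cases v vert' (0 : Fin (tl.length+1)).castSucc,
            Fin.cases v vert' (0 : Fin (tl.length+1)).succ)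
          rw [Fin.castSucc_zero, Fin.cases_zero, Fin.cases_succ, h0]
          exact heq
        · intro j
          show G.ends (tl.get j) = s(Fin.cases v vert' (j.succ).castSucc,
            Fin.cases v vert' (j.succ).succ)
          rw [← Fin.succ_castSucc, Fin.cases_succ, Fin.cases_succ]
          exact hc j

variable {V E : Type} {G : Multigraph V E}

lemma trail_down (t : G.ClosedTrail) {F : Set E} {i : Fin t.n}
    (hF : ∀ j : Fin t.n, j ≠ i → t.edge j ∈ F) :
    ∀ m (hm : m ≤ i.val),
      Relation.ReflTransGen (G.adjOn F) (t.vert ⟨m, by have := i.isLt; omega⟩) (t.vert 0) := by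
  intro m
  induction m with
  | zero =>
      intro _
      have h0 : (⟨0, by have := i.isLt; omega⟩ : Fin (t.n + 1)) = 0 := by
        ext; simp
      rw [h0]
  | succ m ih =>
      intro hm
      have hlt : m < t.n := by have := i.isLt; omega
      have hj : (⟨m, hlt⟩ : Fin t.n) ≠ i := by
        intro h
        have := congrArg Fin.val h
        simp at this; omega
      have he := t.compat ⟨m, hlt⟩
      exact Relation.ReflTransGen.head
        ⟨t.edge ⟨m, hlt⟩, hF _ hj, he.trans Sym2.eq_swap⟩ (ih (by omega))

lemma trail_up (t : G.ClosedTrail) {F : Set E} {i : Fin t.n}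
    (hF : ∀ j : Fin t.n, j ≠ i → t.edge j ∈ F) :
    ∀ k m (hm : m + k = t.n) (him : i.val < m),
      Relation.ReflTransGen (G.adjOn F) (t.vert ⟨m, by omega⟩) (t.vert 0) := by
  intro k
  induction k with
  | zero =>
      intro m hm _
      have hlast : (⟨m, by omega⟩ : Fin (t.n + 1)) = Fin.last t.n := by
        ext; simp; omega
      rw [hlast, t.closed]
  | succ k ih =>
      intro m hm him
      have hlt : m < t.n := by omega
      have hj : (⟨m, hlt⟩ : Fin t.n) ≠ i := by
        intro h
        have := congrArg Fin.val h
        simp at this; omega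
      have he := t.compat ⟨m, hlt⟩
      exact Relation.ReflTransGen.head
        ⟨t.edge ⟨m, hlt⟩, hF _ hj, he⟩ (ih (m + 1) (by omega) (by omega))

lemma connectedOn_of_trail (hbl : G.Bridgeless) (t : G.ClosedTrail) {ea eb : E}
    (i : Fin t.n) (hia : t.edge i = ea) (hb : ∀ j, t.edge j ≠ eb) :
    G.ConnectedOn ({ea, eb} : Set E)ᶜ := by
  have hF : ∀ j : Fin t.n, j ≠ i → t.edge j ∈ ({ea, eb} : Set E)ᶜ := by
    intro j hj
    simp only [Set.mem_compl_iff, Set.mem_insert_iff, Set.mem_singleton_iff, not_or]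
    exact ⟨fun h => hj (t.inj (h.trans hia.symm)), hb j⟩
  have hdown := trail_down t hF i.val (le_refl _)
  have hup := trail_up t hF (t.n - (i.val + 1)) (i.val + 1) (by have := i.isLt; omega)
    (by omega)
  have h12 : Relation.ReflTransGen (G.adjOn ({ea, eb} : Set E)ᶜ)
      (t.vert i.castSucc) (t.vert i.succ) := hdown.trans (rtg_symm hup)
  have h21 := rtg_symm h12
  intro v w
  have h2 := hbl eb v w
  induction h2 with
  | refl => exact .refl
  | tail _ hstep ih =>
      refine ih.trans ?_
      obtain ⟨e, he, heq⟩ := hstep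
      by_cases hea : e = ea
      · have hsym := ((hia ▸ t.compat i : G.ends ea = _).symm).trans (hea ▸ heq)
        rcases Sym2.eq_iff.mp hsym with ⟨hb1, hb2⟩ | ⟨hb1, hb2⟩
        · rw [← hb1, ← hb2]; exact h12
        · rw [← hb1, ← hb2]; exact h21
      · refine Relation.ReflTransGen.single ⟨e, ?_, heq⟩
        simp only [Set.mem_compl_iff, Set.mem_insert_iff, Set.mem_singleton_iff, not_or]
        refine ⟨hea, ?_⟩
        simpa using he

end Multigraph

/-- In a finite connected multigraph with no separating edges, two distinct
edges belong to the same C1-set (deleting both disconnects the graph) if and only if they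
belong to exactly the same cycles of the graph. -/


theorem stmt1 {V E : Type} [Finite V] [Finite E] (G : Multigraph V E)
    (hconn : G.Connected) (hbl : G.Bridgeless) (e₁ e₂ : E) (hne : e₁ ≠ e₂) :
    (¬ G.ConnectedOn ({e₁, e₂} : Set E)ᶜ) ↔
      ∀ t : G.ClosedTrail, (∃ i, t.edge i = e₁) ↔ (∃ i, t.edge i = e₂) := by
  constructor
  · intro hdisc t
    constructor
    · rintro ⟨i, hi⟩
      by_contra hno
      push_neg at hno
      exact hdisc (Multigraph.connectedOn_of_trail hbl t i hi hno)
    · rintro ⟨i, hi⟩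
      by_contra hno
      push_neg at hno
      have := Multigraph.connectedOn_of_trail hbl t i hi hno
      rw [Set.pair_comm] at this
      exact hdisc this
  · intro h hcon
    obtain ⟨v, w, hvw⟩ : ∃ v w, G.ends e₁ = s(v, w) :=
      Sym2.ind (fun x y => ⟨x, y, rfl⟩) (G.ends e₁)
    obtain ⟨es, hwes, hmem⟩ := Multigraph.exists_walk (hcon w v)
    obtain ⟨ts, hts, hnd, hsub⟩ := Multigraph.exists_trail hwes
    have hmem' : ∀ e ∈ ts, e ∉ ({e₁, e₂} : Set E) := fun e hf => hmem e (hsub e hf)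
    have hwalk : G.IsWalk v (e₁ :: ts) v := ⟨w, hvw, hts⟩
    obtain ⟨vert, h0, hl, hc⟩ := Multigraph.isWalk_toFin hwalk
    have hnodup : (e₁ :: ts).Nodup :=
      hnd.cons (fun hin => hmem' e₁ hin (by simp))
    let t : G.ClosedTrail :=
      { n := (e₁ :: ts).length
        npos := by simp
        vert := vert
        edge := fun i => (e₁ :: ts).get i
        closed := hl.trans h0.symm
        compat := hc
        inj := fun i j hij => List.nodup_iff_injective_get.mp hnodup hij }
    have h1 : ∃ i, t.edge i = e₁ := ⟨⟨0, t.npos⟩, rfl⟩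
    obtain ⟨i, hi⟩ := (h t).mp h1
    have hmem2 : e₂ ∈ e₁ :: ts := hi ▸ List.get_mem _ _
    rcases List.mem_cons.mp hmem2 with h' | h'
    · exact hne h'.symm
    · exact hmem' e₂ h' (by simp)
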